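/- Let X^(1), …, X^(m) be random vectors in ℝ^n, each taking finitely many values, on a common atomless probability space, and set S_i^(k) = Σ_{ν=1}^k X_i^(ν) with S^(0) = 0. Assume: (i) for each k, conditionally on S^(k−1), the vector X^(k) is negatively supermodular dependent (for every value s of S^(k−1) with positive probability, the conditional law of X^(k) given S^(k−1)=s is NSMD); (ii) for each k and each I ⊆ {1,…,n}, the conditional distribution of X_I^(k) given S^(k−1) depends only on S_I^(k−1); (iii) for each k and each I ⊆ {1,…,n}, the conditional law of X_I^(k) given S_I^(k−1) = s_I is stochastically increasing in s_I. Then S^(k) = (S_1^(k), …, S_n^(k)) is negatively supermodular dependent for every k ∈ {1,…,m}. -/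

import Mathlib

open MeasureTheory ProbabilityTheory
open scoped Classical

noncomputable section

/-- A random vector `X = (X_1,…,X_n)` is negatively supermodular dependent (NSMD)
under the probability measure `μ` : `E[ψ(X)] ≤ E[ψ(X^⊥)]` for every bounded
measurable supermodular `ψ`, where `X^⊥` has independent components with the same
marginals as `X` (its law is the product of the marginal laws of `X`). -/
def IsNSMD {Ω : Type*} [MeasurableSpace Ω] (μ : Measure Ω) {n : ℕ}
    (X : Ω → Fin n → ℝ) : Prop :=
  ∀ ψ : (Fin n → ℝ) → ℝ, Measurable ψ → (∃ C, ∀ v, |ψ v| ≤ C) →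
    (∀ x y : Fin n → ℝ, ψ x + ψ y ≤ ψ (x ⊔ y) + ψ (x ⊓ y)) →
    ∫ ω, ψ (X ω) ∂μ
      ≤ ∫ x, ψ x ∂(Measure.pi fun i => Measure.map (fun ω => X ω i) μ)


/- ===== auxiliary lemmas ===== -/

lemma integrable_dirac' {α : Type*} [MeasurableSpace α] [MeasurableSingletonClass α]
    (f : α → ℝ) (a : α) : Integrable f (Measure.dirac a) := by
  have hae : f =ᵐ[Measure.dirac a] (fun _ => f a) := by
    rw [ae_dirac_eq]; exact Filter.eventually_pure.2 rfl
  exact (integrable_const (f a)).congr hae.symm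

/-- integral against a finite combination of diracs -/
lemma integral_finset_dirac {α : Type*} [MeasurableSpace α] [MeasurableSingletonClass α]
    (s : Finset α) (c : α → ENNReal) (hc : ∀ x ∈ s, c x ≠ ⊤) (f : α → ℝ) :
    ∫ x, f x ∂(∑ a ∈ s, c a • Measure.dirac a) = ∑ a ∈ s, (c a).toReal * f a := by
  rw [integral_finset_sum_measure]
  · exact Finset.sum_congr rfl fun a ha => by
      rw [integral_smul_measure, integral_dirac, smul_eq_mul]
  · exact fun a ha => (integrable_dirac' f a).smul_measure (hc a ha)

/-- a measurable finite-range map pushes a measure to a combination of diracs -/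
lemma map_eq_sum_dirac {Ω α : Type*} [MeasurableSpace Ω] [MeasurableSpace α]
    [MeasurableSingletonClass α] (ν : Measure Ω) {Y : Ω → α} (hY : Measurable Y)
    (R : Finset α) (hR : ∀ ω, Y ω ∈ R) :
    Measure.map Y ν = ∑ a ∈ R, ν (Y ⁻¹' {a}) • Measure.dirac a := by
  ext t ht
  rw [Measure.map_apply hY ht, Measure.finset_sum_apply]
  have h1 : Y ⁻¹' t = ⋃ a ∈ R.filter (· ∈ t), Y ⁻¹' {a} := by
    ext ω; simp only [Set.mem_preimage, Set.mem_iUnion, Finset.mem_filter, Set.mem_singleton_iff]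
    constructor
    · intro h; exact ⟨Y ω, ⟨⟨hR ω, h⟩, rfl⟩⟩
    · rintro ⟨a, ⟨-, ha2⟩, rfl⟩; exact ha2
  rw [h1, measure_biUnion_finset]
  · rw [Finset.sum_filter]
    refine Finset.sum_congr rfl fun a ha => ?_
    rw [Measure.smul_apply, Measure.dirac_apply' a ht, smul_eq_mul]
    by_cases h : a ∈ t
    · simp [h, Set.indicator_of_mem]
    · simp [h, Set.indicator_of_notMem]
  · intro a ha b hb hab
    exact Set.disjoint_iff_forall_ne.2 (by
      rintro ω hω ω' hω' rfl
      exact hab (by simp only [Set.mem_preimage, Set.mem_singleton_iff] at hω hω'; rw [← hω, hω']))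
  · exact fun a _ => hY (measurableSet_singleton a)

/-- integral of a function of a finite-range random variable -/
lemma integral_comp_finrange {Ω α : Type*} [MeasurableSpace Ω] [MeasurableSpace α]
    [MeasurableSingletonClass α] (ν : Measure Ω) [IsFiniteMeasure ν] {Y : Ω → α}
    (hY : Measurable Y) (R : Finset α) (hR : ∀ ω, Y ω ∈ R) (f : α → ℝ) :
    ∫ ω, f (Y ω) ∂ν = ∑ a ∈ R, (ν (Y ⁻¹' {a})).toReal * f a := by
  have huniv : (Set.univ : Set Ω) = ⋃ a ∈ R, Y ⁻¹' {a} := by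
    ext ω; simp only [Set.mem_univ, Set.mem_iUnion, true_iff, Set.mem_preimage,
      Set.mem_singleton_iff]
    exact ⟨Y ω, hR ω, rfl⟩
  have hdisj : (R : Set α).Pairwise (Function.onFun Disjoint fun a => Y ⁻¹' {a}) := by
    intro a _ b _ hab
    exact Set.disjoint_iff_forall_ne.2 (by
      rintro ω hω ω' hω' rfl
      exact hab (by simp only [Set.mem_preimage, Set.mem_singleton_iff] at hω hω'; rw [← hω, hω']))
  have hmeas : ∀ a ∈ R, MeasurableSet (Y ⁻¹' {a}) := fun a _ => hY (measurableSet_singleton a)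
  calc ∫ ω, f (Y ω) ∂ν = ∫ ω in ⋃ a ∈ R, Y ⁻¹' {a}, f (Y ω) ∂ν := by
        rw [← huniv, setIntegral_univ]
    _ = ∑ a ∈ R, ∫ ω in Y ⁻¹' {a}, f (Y ω) ∂ν := by
        refine integral_biUnion_finset R hmeas hdisj fun a _ => ?_
        refine IntegrableOn.congr_fun (f := fun _ => f a)
          (integrableOn_const (measure_ne_top _ _)) ?_ (hmeas a ‹_›)
        intro ω hω
        simp only [Set.mem_preimage, Set.mem_singleton_iff] at hω
        exact (congrArg f hω).symm
    _ = ∑ a ∈ R, (ν (Y ⁻¹' {a})).toReal * f a := by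
        refine Finset.sum_congr rfl fun a ha => ?_
        rw [setIntegral_congr_fun (hmeas a ha) (g := fun _ => f a) ?_, setIntegral_const,
          smul_eq_mul, measureReal_def]
        intro ω hω
        simp only [Set.mem_preimage, Set.mem_singleton_iff] at hω
        exact congrArg f hω

/-- decomposition of an integral over the fibers of a finite-range variable -/
lemma integral_partition {Ω α : Type*} [MeasurableSpace Ω] [MeasurableSpace α]
    [MeasurableSingletonClass α] (ν : Measure Ω) [IsFiniteMeasure ν] {Y : Ω → α}
    (hY : Measurable Y) (R : Finset α) (hR : ∀ ω, Y ω ∈ R) (f : Ω → ℝ)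
    (hf : Integrable f ν) :
    ∫ ω, f ω ∂ν = ∑ a ∈ R, (ν (Y ⁻¹' {a})).toReal * ∫ ω, f ω ∂(ν[|Y ⁻¹' {a}]) := by
  have huniv : (Set.univ : Set Ω) = ⋃ a ∈ R, Y ⁻¹' {a} := by
    ext ω; simp only [Set.mem_univ, Set.mem_iUnion, true_iff, Set.mem_preimage,
      Set.mem_singleton_iff]
    exact ⟨Y ω, hR ω, rfl⟩
  have hdisj : (R : Set α).Pairwise (Function.onFun Disjoint fun a => Y ⁻¹' {a}) := by
    intro a _ b _ hab
    exact Set.disjoint_iff_forall_ne.2 (by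
      rintro ω hω ω' hω' rfl
      exact hab (by simp only [Set.mem_preimage, Set.mem_singleton_iff] at hω hω'; rw [← hω, hω']))
  have hmeas : ∀ a ∈ R, MeasurableSet (Y ⁻¹' {a}) := fun a _ => hY (measurableSet_singleton a)
  calc ∫ ω, f ω ∂ν = ∫ ω in ⋃ a ∈ R, Y ⁻¹' {a}, f ω ∂ν := by rw [← huniv, setIntegral_univ]
    _ = ∑ a ∈ R, ∫ ω in Y ⁻¹' {a}, f ω ∂ν :=
        integral_biUnion_finset R hmeas hdisj fun a _ => hf.integrableOn
    _ = ∑ a ∈ R, (ν (Y ⁻¹' {a})).toReal * ∫ ω, f ω ∂(ν[|Y ⁻¹' {a}]) := by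
        refine Finset.sum_congr rfl fun a ha => ?_
        rw [ProbabilityTheory.cond, integral_smul_measure, smul_eq_mul, ← mul_assoc]
        by_cases h0 : ν (Y ⁻¹' {a}) = 0
        · have hz : ∫ ω in Y ⁻¹' {a}, f ω ∂ν = 0 := by
            rw [Measure.restrict_eq_zero.2 h0, integral_zero_measure]
          rw [hz, h0]; simp
        · rw [ENNReal.toReal_inv, mul_inv_cancel₀ (by
            simp [ENNReal.toReal_ne_zero, h0, (measure_ne_top ν _)]), one_mul]

/-- composing with a finite-range measurable map preserves measurability for any outer map -/
lemma measurable_comp_finrange {Ω α γ : Type*} [MeasurableSpace Ω] [MeasurableSpace α]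
    [MeasurableSpace γ] [MeasurableSingletonClass α] {Y : Ω → α} (hY : Measurable Y)
    (R : Finset α) (hR : ∀ ω, Y ω ∈ R) (g : α → γ) : Measurable fun ω => g (Y ω) := by
  intro t ht
  have : (fun ω => g (Y ω)) ⁻¹' t = ⋃ a ∈ R.filter (g · ∈ t), Y ⁻¹' {a} := by
    ext ω; simp only [Set.mem_preimage, Set.mem_iUnion, Finset.mem_filter,
      Set.mem_singleton_iff]
    constructor
    · intro h; exact ⟨Y ω, ⟨⟨hR ω, h⟩, rfl⟩⟩
    · rintro ⟨a, ⟨-, ha2⟩, rfl⟩; exact ha2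
  rw [this]
  exact (R.filter (g · ∈ t)).measurableSet_biUnion fun a _ => hY (measurableSet_singleton a)
variable {n : ℕ}

/-- pairwise increasing differences -/
def PID (f : (Fin n → ℝ) → ℝ) : Prop :=
  ∀ i j : Fin n, i ≠ j → ∀ (z : Fin n → ℝ) (a a' b b' : ℝ), a ≤ a' → b ≤ b' →
    f (Function.update (Function.update z i a') j b)
      + f (Function.update (Function.update z i a) j b')
    ≤ f (Function.update (Function.update z i a) j b)
      + f (Function.update (Function.update z i a') j b')

lemma supermodular_PID {f : (Fin n → ℝ) → ℝ}
    (hf : ∀ x y : Fin n → ℝ, f x + f y ≤ f (x ⊔ y) + f (x ⊓ y)) : PID f := by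
  intro i j hij z a a' b b' ha hb
  have h := hf (Function.update (Function.update z i a') j b)
    (Function.update (Function.update z i a) j b')
  have hsup : Function.update (Function.update z i a') j b
      ⊔ Function.update (Function.update z i a) j b'
      = Function.update (Function.update z i a') j b' := by
    funext l
    simp only [Pi.sup_apply, Function.update_apply]
    by_cases hlj : l = j
    · simp [hlj, sup_eq_right.2 hb]
    · by_cases hli : l = i
      · subst hli; simp [hlj, sup_eq_left.2 ha]
      · simp [hlj, hli]
  have hinf : Function.update (Function.update z i a') j b
      ⊓ Function.update (Function.update z i a) j b'
      = Function.update (Function.update z i a) j b := by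
    funext l
    simp only [Pi.inf_apply, Function.update_apply]
    by_cases hlj : l = j
    · simp [hlj, inf_eq_left.2 hb]
    · by_cases hli : l = i
      · subst hli; simp [hlj, inf_eq_right.2 ha]
      · simp [hlj, hli]
  rw [hsup, hinf] at h
  linarith

lemma PID_block {f : (Fin n → ℝ) → ℝ} (hf : PID f) (D : Finset (Fin n)) :
    ∀ j ∉ D, ∀ (a : ℝ) (v w : Fin n → ℝ), v ≤ w → (∀ l ∉ D, v l = w l) → a ≤ v j →
      f (Function.update w j a) + f v ≤ f w + f (Function.update v j a) := by
  induction D using Finset.induction_on with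
  | empty =>
    intro j _ a v w hvw heq ha
    have : v = w := funext fun l => heq l (Finset.notMem_empty l)
    rw [this]
    exact le_of_eq (by ring)
  | @insert i D' hiD' IH =>
    intro j hj a v w hvw heq ha
    have hji : j ≠ i := fun h => hj (h ▸ Finset.mem_insert_self i D')
    have hjD' : j ∉ D' := fun h => hj (Finset.mem_insert_of_mem h)
    set w' := Function.update w i (v i) with hw'
    have heq' : ∀ l ∉ D', v l = w' l := by
      intro l hl
      by_cases hli : l = i
      · subst hli; simp [hw']
      · rw [hw', Function.update_apply, if_neg hli]
        exact heq l (by simp [Finset.mem_insert, hli, hl])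
    have hvw' : v ≤ w' := by
      intro l
      by_cases hli : l = i
      · subst hli; simp [hw']
      · rw [hw', Function.update_apply, if_neg hli]; exact hvw l
    have hIH := IH j hjD' a v w' hvw' heq' ha
    -- PID step : f (update w j a) + f w' ≤ f w + f (update w' j a)
    have hstep := hf i j (fun h => hji h.symm) w (v i) (w i) a (w j) (hvw i)
      (ha.trans ((hvw j)))
    rw [Function.update_eq_self i w] at hstep
    have e1 : Function.update (Function.update w i (v i)) j (w j)
        = Function.update w i (v i) := by
      rw [show w j = Function.update w i (v i) j by
        rw [Function.update_apply, if_neg hji]]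
      exact Function.update_eq_self _ _
    rw [e1, Function.update_eq_self j w] at hstep
    -- hstep : f (update w' j a) + f w ≤ f (update w j a) + f w' ... check direction
    linarith [hIH, hstep]

lemma PID_supermodular {f : (Fin n → ℝ) → ℝ} (hf : PID f) :
    ∀ x y : Fin n → ℝ, f x + f y ≤ f (x ⊔ y) + f (x ⊓ y) := by
  suffices H : ∀ D : Finset (Fin n), ∀ x y : Fin n → ℝ, (∀ l ∉ D, y l ≤ x l) →
      f x + f y ≤ f (x ⊔ y) + f (x ⊓ y) by
    intro x y
    exact H Finset.univ x y (fun l hl => absurd (Finset.mem_univ l) hl)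
  intro D
  induction D using Finset.induction_on with
  | empty =>
    intro x y h
    have hyx : y ≤ x := fun l => h l (Finset.notMem_empty l)
    rw [sup_eq_left.2 hyx, inf_eq_right.2 hyx]
  | @insert j D' hjD' IH =>
    intro x y h
    by_cases hxy : y j ≤ x j
    · refine IH x y fun l hl => ?_
      by_cases hlj : l = j
      · subst hlj; exact hxy
      · exact h l (by simp [Finset.mem_insert, hlj, hl])
    · push_neg at hxy
      set y' := Function.update y j (x j) with hy'
      have hIH : f x + f y' ≤ f (x ⊔ y') + f (x ⊓ y') := by
        refine IH x y' fun l hl => ?_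
        by_cases hlj : l = j
        · subst hlj; simp [hy']
        · rw [hy', Function.update_apply, if_neg hlj]
          exact h l (by simp [Finset.mem_insert, hlj, hl])
      have hinf : x ⊓ y' = x ⊓ y := by
        funext l
        by_cases hlj : l = j
        · subst hlj
          simp [hy', Pi.inf_apply, inf_eq_left.2 hxy.le, inf_idem]
        · simp [hy', Pi.inf_apply, Function.update_apply, if_neg hlj]
      have hsupj : (x ⊔ y) j = y j := sup_eq_right.2 hxy.le
      have hsup : x ⊔ y' = Function.update (x ⊔ y) j (x j) := by
        funext l
        by_cases hlj : l = j
        · subst hlj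
          simp [hy', Pi.sup_apply, Function.update_apply, sup_idem]
        · simp [hy', Pi.sup_apply, Function.update_apply, if_neg hlj]
      -- block step with D = univ.erase j
      have hblock := PID_block hf (Finset.univ.erase j) j (by simp) (x j) y (x ⊔ y)
        le_sup_right (fun l hl => by
          have : l = j := by
            by_contra hne
            exact hl (Finset.mem_erase.2 ⟨hne, Finset.mem_univ l⟩)
          subst this; exact hsupj.symm) hxy.le
      -- hblock : f (update (x⊔y) j (x j)) + f y ≤ f (x⊔y) + f (update y j (x j))
      rw [← hsup] at hblock
      rw [hinf] at hIH
      linarith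

/-- projection of `ℝ` onto a nonempty finite set: largest element `≤ t`, or the minimum. -/
def projT (T : Finset ℝ) (hT : T.Nonempty) (t : ℝ) : ℝ :=
  if h : (T.filter (fun x => x ≤ t)).Nonempty then (T.filter (fun x => x ≤ t)).max' h
  else T.min' hT

lemma projT_mem (T : Finset ℝ) (hT : T.Nonempty) (t : ℝ) : projT T hT t ∈ T := by
  rw [projT]
  split_ifs with h
  · exact Finset.mem_of_mem_filter _ ((T.filter (fun x => x ≤ t)).max'_mem h)
  · exact T.min'_mem hT

lemma projT_eq_self (T : Finset ℝ) (hT : T.Nonempty) {t : ℝ} (ht : t ∈ T) :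
    projT T hT t = t := by
  have hmem : t ∈ T.filter (fun x => x ≤ t) := Finset.mem_filter.2 ⟨ht, le_refl t⟩
  have hne : (T.filter (fun x => x ≤ t)).Nonempty := ⟨t, hmem⟩
  rw [projT, dif_pos hne]
  refine le_antisymm ?_ (Finset.le_max' _ t hmem)
  exact (Finset.mem_filter.1 ((T.filter (fun x => x ≤ t)).max'_mem hne)).2

lemma projT_mono (T : Finset ℝ) (hT : T.Nonempty) : Monotone (projT T hT) := by
  intro t t' htt'
  have hsub : T.filter (fun x => x ≤ t) ⊆ T.filter (fun x => x ≤ t') := by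
    intro x hx
    rw [Finset.mem_filter] at hx ⊢
    exact ⟨hx.1, hx.2.trans htt'⟩
  rw [projT, projT]
  by_cases h : (T.filter (fun x => x ≤ t)).Nonempty
  · have h' : (T.filter (fun x => x ≤ t')).Nonempty := h.mono hsub
    rw [dif_pos h, dif_pos h']
    exact Finset.max'_subset h hsub
  · rw [dif_neg h]
    by_cases h' : (T.filter (fun x => x ≤ t')).Nonempty
    · rw [dif_pos h']
      exact T.min'_le _ (Finset.mem_of_mem_filter _ ((T.filter (fun x => x ≤ t')).max'_mem h'))
    · rw [dif_neg h']

lemma pi_eq_sum_dirac {n : ℕ} (ν : Fin n → Measure ℝ) (R : Fin n → Finset ℝ)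
    (c : Fin n → ℝ → ENNReal) (hcfin : ∀ i, ∀ r ∈ R i, c i r ≠ ⊤)
    (hν : ∀ i, ν i = ∑ r ∈ R i, c i r • Measure.dirac r) :
    Measure.pi ν = ∑ x ∈ Fintype.piFinset R, (∏ i, c i (x i)) • Measure.dirac x := by
  have hfin : ∀ i, IsFiniteMeasure (ν i) := by
    intro i
    constructor
    rw [hν i, Measure.finset_sum_apply]
    refine ENNReal.sum_lt_top.2 fun r hr => ?_
    rw [Measure.smul_apply, smul_eq_mul]
    exact ENNReal.mul_lt_top (hcfin i r hr).lt_top (by simp [measure_lt_top])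
  have : ∀ i, SigmaFinite (ν i) := fun i => (hfin i).toSigmaFinite
  refine Measure.pi_eq fun s hs => ?_
  have hbox : MeasurableSet (Set.univ.pi s) := MeasurableSet.univ_pi hs
  rw [Measure.finset_sum_apply]
  have step1 : ∀ x ∈ Fintype.piFinset R,
      ((∏ i, c i (x i)) • Measure.dirac x) (Set.univ.pi s)
        = ∏ i, (c i (x i) * (s i).indicator 1 (x i)) := by
    intro x _
    rw [Measure.smul_apply, Measure.dirac_apply' x hbox, smul_eq_mul]
    by_cases hx : x ∈ Set.univ.pi s
    · rw [Set.indicator_of_mem hx]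
      have : ∀ i, (s i).indicator (1 : ℝ → ENNReal) (x i) = 1 := fun i =>
        Set.indicator_of_mem (Set.mem_univ_pi.1 hx i) 1
      simp only [this, mul_one, Pi.one_apply]
    · rw [Set.indicator_of_notMem hx, mul_zero]
      obtain ⟨i0, hi0⟩ := by
        simpa only [Set.mem_univ_pi, not_forall] using hx
      refine (Finset.prod_eq_zero (Finset.mem_univ i0) ?_).symm
      rw [Set.indicator_of_notMem hi0, mul_zero]
  rw [Finset.sum_congr rfl step1]
  have hps := Finset.prod_univ_sum R (fun i r => c i r * (s i).indicator 1 r)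
  rw [← hps]
  refine Finset.prod_congr rfl fun i _ => ?_
  rw [hν i, Measure.finset_sum_apply]
  refine (Finset.sum_congr rfl fun r _ => ?_).symm
  rw [Measure.smul_apply, Measure.dirac_apply' r (hs i), smul_eq_mul]

/-- splitting a sum over `piFinset` at two coordinates -/
lemma sum_piFinset_split2 {n : ℕ} {i j : Fin n} (hij : i ≠ j) (R : Fin n → Finset ℝ)
    (h : (Fin n → ℝ) → ℝ) :
    ∑ x ∈ Fintype.piFinset R, h x
      = ∑ u ∈ R i, ∑ v ∈ R j,
          ∑ y ∈ Fintype.piFinset (fun l => if l = i ∨ l = j then ({0} : Finset ℝ) else R l),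
            h (Function.update (Function.update y i u) j v) := by
  classical
  set R' : Fin n → Finset ℝ := fun l => if l = i ∨ l = j then ({0} : Finset ℝ) else R l with hR'
  have key : ∀ x : Fin n → ℝ,
      Function.update (Function.update
        (Function.update (Function.update x i 0) j 0) i (x i)) j (x j) = x := by
    intro x
    funext l
    by_cases hlj : l = j
    · subst hlj; simp
    · by_cases hli : l = i
      · subst hli
        rw [Function.update_apply, if_neg hlj, Function.update_self]
      · simp [Function.update_apply, hlj, hli]
  calc ∑ x ∈ Fintype.piFinset R, h x
      = ∑ p ∈ (R i) ×ˢ ((R j) ×ˢ Fintype.piFinset R'),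
          h (Function.update (Function.update p.2.2 i p.1) j p.2.1) := by
        refine Finset.sum_nbij'
          (fun x => (x i, (x j, Function.update (Function.update x i 0) j 0)))
          (fun p => Function.update (Function.update p.2.2 i p.1) j p.2.1)
          ?_ ?_ ?_ ?_ ?_
        · intro x hx
          rw [Fintype.mem_piFinset] at hx
          rw [Finset.mem_product, Finset.mem_product]
          refine ⟨hx i, hx j, ?_⟩
          rw [Fintype.mem_piFinset]
          intro l
          simp only [Function.update_apply]
          by_cases hlj : l = j
          · simp [hlj, hR']
          · by_cases hli : l = i
            · simp [hli, hlj, hR']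
            · simp only [if_neg hlj, if_neg hli, hR']
              simp only [if_neg (by tauto : ¬(l = i ∨ l = j))]
              exact hx l
        · intro p hp
          rw [Finset.mem_product, Finset.mem_product] at hp
          obtain ⟨h1, h2, h3⟩ := hp
          rw [Fintype.mem_piFinset] at h3 ⊢
          intro l
          simp only [Function.update_apply]
          by_cases hlj : l = j
          · subst hlj; simpa using h2
          · by_cases hli : l = i
            · subst hli; simp only [if_neg hlj, if_pos rfl]; exact h1
            · simp only [if_neg hlj, if_neg hli]
              have := h3 l
              simp only [hR', if_neg (by tauto : ¬(l = i ∨ l = j))] at this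
              exact this
        · intro x hx
          exact key x
        · intro p hp
          rw [Finset.mem_product, Finset.mem_product] at hp
          obtain ⟨h1, h2, h3⟩ := hp
          rw [Fintype.mem_piFinset] at h3
          have hyi : p.2.2 i = 0 := by
            have := h3 i
            simpa [hR'] using this
          have hyj : p.2.2 j = 0 := by
            have := h3 j
            simpa [hR'] using this
          have e1 : (Function.update (Function.update p.2.2 i p.1) j p.2.1) i = p.1 := by
            rw [Function.update_apply, if_neg hij, Function.update_self]
          have e2 : (Function.update (Function.update p.2.2 i p.1) j p.2.1) j = p.2.1 := by
            rw [Function.update_self]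
          refine Prod.ext ?_ (Prod.ext ?_ ?_) <;> simp only [e1, e2]
          funext l
          by_cases hlj : l = j
          · subst hlj; simp [hyj]
          · by_cases hli : l = i
            · subst hli
              rw [Function.update_apply, if_neg hlj, Function.update_self, hyi]
            · simp [Function.update_apply, hlj, hli]
        · intro x hx
          exact (congrArg h (key x)).symm
    _ = ∑ u ∈ R i, ∑ p ∈ (R j) ×ˢ Fintype.piFinset R',
          h (Function.update (Function.update p.2 i u) j p.1) :=
        Finset.sum_product _ _ _
    _ = ∑ u ∈ R i, ∑ v ∈ R j, ∑ y ∈ Fintype.piFinset R',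
          h (Function.update (Function.update y i u) j v) :=
        Finset.sum_congr rfl fun u _ => Finset.sum_product _ _ _

section DiscretePID
open Finset
variable {n : ℕ}

lemma discrete_grid_PID (ψ : (Fin n → ℝ) → ℝ) (C : ℝ) (hψb : ∀ v, |ψ v| ≤ C)
    (hψsm : ∀ x y : Fin n → ℝ, ψ x + ψ y ≤ ψ (x ⊔ y) + ψ (x ⊓ y))
    (RngX T : Fin n → Finset ℝ) (w : Fin n → ℝ → ℝ → ℝ)
    (hw0 : ∀ i t r, 0 ≤ w i t r)
    (hw1 : ∀ i, ∀ t ∈ T i, ∑ r ∈ RngX i, w i t r = 1)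
    (hSM : ∀ i, ∀ t ∈ T i, ∀ t' ∈ T i, t ≤ t' → ∀ d : ℝ → ℝ, Monotone d →
      (∃ C0, ∀ r, |d r| ≤ C0) →
      ∑ r ∈ RngX i, w i t r * d r ≤ ∑ r ∈ RngX i, w i t' r * d r)
    (g : (Fin n → ℝ) → ℝ)
    (hg : ∀ s, g s = ∑ x ∈ Fintype.piFinset RngX, (∏ l, w l (s l) (x l)) * ψ (s + x))
    (z : Fin n → ℝ) (hz : ∀ l, z l ∈ T l) (i j : Fin n) (hij : i ≠ j)
    (a a' b b' : ℝ) (ha : a ∈ T i) (ha' : a' ∈ T i) (hb : b ∈ T j) (hb' : b' ∈ T j)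
    (haa : a ≤ a') (hbb : b ≤ b') :
    g (Function.update (Function.update z i a') j b)
      + g (Function.update (Function.update z i a) j b')
    ≤ g (Function.update (Function.update z i a) j b)
      + g (Function.update (Function.update z i a') j b') := by
  classical
  set R' : Fin n → Finset ℝ := fun l => if l = i ∨ l = j then ({0} : Finset ℝ) else RngX l
    with hR'
  set E : Finset (Fin n) := (Finset.univ.erase i).erase j with hE
  set F : ℝ → ℝ → ℝ := fun p q => ∑ y ∈ Fintype.piFinset R',
    (∏ l ∈ E, w l (z l) (y l))
      * ψ (Function.update (Function.update (fun l => z l + y l) i p) j q) with hF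
  -- nonnegativity of the E-weights
  have hwE0 : ∀ y : Fin n → ℝ, 0 ≤ ∏ l ∈ E, w l (z l) (y l) :=
    fun y => Finset.prod_nonneg fun l _ => hw0 l (z l) (y l)
  -- the E-weights sum to one
  have hwE1 : ∑ y ∈ Fintype.piFinset R', ∏ l ∈ E, w l (z l) (y l) = 1 := by
    have hconv : ∀ y ∈ Fintype.piFinset R', ∏ l ∈ E, w l (z l) (y l)
        = ∏ l, (if l = i ∨ l = j then (1:ℝ) else w l (z l) (y l)) := by
      intro y _
      have h1 : (∏ l, (if l = i ∨ l = j then (1:ℝ) else w l (z l) (y l)))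
          = (if i = i ∨ i = j then (1:ℝ) else w i (z i) (y i))
            * ∏ l ∈ Finset.univ.erase i, (if l = i ∨ l = j then (1:ℝ) else w l (z l) (y l)) :=
        (Finset.mul_prod_erase Finset.univ _ (Finset.mem_univ i)).symm
      have h2 : (∏ l ∈ Finset.univ.erase i, (if l = i ∨ l = j then (1:ℝ) else w l (z l) (y l)))
          = (if j = i ∨ j = j then (1:ℝ) else w j (z j) (y j))
            * ∏ l ∈ E, (if l = i ∨ l = j then (1:ℝ) else w l (z l) (y l)) :=
        (Finset.mul_prod_erase (Finset.univ.erase i) _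
          (Finset.mem_erase.2 ⟨fun h => hij h.symm, Finset.mem_univ j⟩)).symm
      rw [h1, h2, if_pos (Or.inl rfl : i = i ∨ i = j), if_pos (Or.inr rfl : j = i ∨ j = j),
        one_mul, one_mul]
      refine Finset.prod_congr rfl fun l hl => ?_
      rw [hE, Finset.mem_erase, Finset.mem_erase] at hl
      rw [if_neg (by tauto : ¬(l = i ∨ l = j))]
    calc ∑ y ∈ Fintype.piFinset R', ∏ l ∈ E, w l (z l) (y l)
        = ∑ y ∈ Fintype.piFinset R', ∏ l, (if l = i ∨ l = j then (1:ℝ) else w l (z l) (y l)) :=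
          Finset.sum_congr rfl hconv
      _ = ∏ l, ∑ r ∈ R' l, (if l = i ∨ l = j then (1:ℝ) else w l (z l) r) :=
          (Finset.prod_univ_sum R' (fun l r => if l = i ∨ l = j then (1:ℝ) else w l (z l) r)).symm
      _ = 1 := by
          refine Finset.prod_eq_one fun l _ => ?_
          by_cases hl : l = i ∨ l = j
          · simp [hR', hl]
          · simp only [hR', if_neg hl]
            exact hw1 l (z l) (hz l)
  -- F is bounded by C
  have hFb : ∀ p q, |F p q| ≤ C := by
    intro p q
    rw [hF]
    calc |∑ y ∈ Fintype.piFinset R', (∏ l ∈ E, w l (z l) (y l)) * ψ _|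
        ≤ ∑ y ∈ Fintype.piFinset R', |(∏ l ∈ E, w l (z l) (y l)) * ψ _| :=
          Finset.abs_sum_le_sum_abs _ _
      _ ≤ ∑ y ∈ Fintype.piFinset R', (∏ l ∈ E, w l (z l) (y l)) * C := by
          refine Finset.sum_le_sum fun y _ => ?_
          rw [abs_mul, abs_of_nonneg (hwE0 y)]
          exact mul_le_mul_of_nonneg_left (hψb _) (hwE0 y)
      _ = C := by rw [← Finset.sum_mul, hwE1, one_mul]
  -- F has increasing differences
  have hFid : ∀ p p' q q', p ≤ p' → q ≤ q' → F p' q + F p q' ≤ F p q + F p' q' := by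
    intro p p' q q' hp hq
    rw [hF]
    simp only []
    rw [← Finset.sum_add_distrib, ← Finset.sum_add_distrib]
    refine Finset.sum_le_sum fun y _ => ?_
    rw [← mul_add, ← mul_add]
    refine mul_le_mul_of_nonneg_left ?_ (hwE0 y)
    exact supermodular_PID hψsm i j hij (fun l => z l + y l) p p' q q' hp hq
  -- representation of g at modified grid points
  have hrep : ∀ α β, g (Function.update (Function.update z i α) j β)
      = ∑ u ∈ RngX i, ∑ v ∈ RngX j, w i α u * w j β v * F (α + u) (β + v) := by
    intro α β
    set s : Fin n → ℝ := Function.update (Function.update z i α) j β with hs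
    have hsi : s i = α := by
      rw [hs, Function.update_apply, if_neg hij, Function.update_self]
    have hsj : s j = β := by rw [hs, Function.update_self]
    have hsl : ∀ l, l ≠ i → l ≠ j → s l = z l := by
      intro l hli hlj
      rw [hs, Function.update_apply, if_neg hlj, Function.update_apply, if_neg hli]
    rw [hg, sum_piFinset_split2 hij RngX]
    refine Finset.sum_congr rfl fun u hu => Finset.sum_congr rfl fun v hv => ?_
    rw [Finset.mul_sum]
    refine Finset.sum_congr rfl fun y hy => ?_
    set x : Fin n → ℝ := Function.update (Function.update y i u) j v with hx
    have hxi : x i = u := by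
      rw [hx, Function.update_apply, if_neg hij, Function.update_self]
    have hxj : x j = v := by rw [hx, Function.update_self]
    have hxl : ∀ l, l ≠ i → l ≠ j → x l = y l := by
      intro l hli hlj
      rw [hx, Function.update_apply, if_neg hlj, Function.update_apply, if_neg hli]
    have hprod : (∏ l, w l (s l) (x l))
        = w i α u * (w j β v * ∏ l ∈ E, w l (z l) (y l)) := by
      rw [← Finset.mul_prod_erase Finset.univ _ (Finset.mem_univ i),
        ← Finset.mul_prod_erase (Finset.univ.erase i) _
          (Finset.mem_erase.2 ⟨fun h => hij h.symm, Finset.mem_univ j⟩)]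
      rw [hsi, hsj, hxi, hxj]
      congr 2
      refine Finset.prod_congr rfl fun l hl => ?_
      rw [Finset.mem_erase, Finset.mem_erase] at hl
      rw [hsl l hl.2.1 hl.1, hxl l hl.2.1 hl.1]
    have hpsi : s + x = Function.update (Function.update
        (fun l => z l + y l) i (α + u)) j (β + v) := by
      funext l
      by_cases hlj : l = j
      · subst hlj
        rw [Pi.add_apply, hsj, hxj, Function.update_self]
      · by_cases hli : l = i
        · subst hli
          rw [Pi.add_apply, hsi, hxi, Function.update_apply, if_neg hlj,
            Function.update_self]
        · rw [Pi.add_apply, hsl l hli hlj, hxl l hli hlj, Function.update_apply,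
            if_neg hlj, Function.update_apply, if_neg hli]
    rw [hprod, hpsi]
    ring
  -- the kernel-averaged one-coordinate function
  set K : ℝ → ℝ → ℝ := fun α q => ∑ u ∈ RngX i, w i α u * F (α + u) q with hK
  set h : ℝ → ℝ := fun q => K a' q - K a q with hh
  have hKb : ∀ α, α ∈ T i → ∀ q, |K α q| ≤ C := by
    intro α hα q
    calc |∑ u ∈ RngX i, w i α u * F (α + u) q|
        ≤ ∑ u ∈ RngX i, |w i α u * F (α + u) q| := Finset.abs_sum_le_sum_abs _ _
      _ ≤ ∑ u ∈ RngX i, w i α u * C := by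
          refine Finset.sum_le_sum fun u _ => ?_
          rw [abs_mul, abs_of_nonneg (hw0 i α u)]
          exact mul_le_mul_of_nonneg_left (hFb _ _) (hw0 i α u)
      _ = C := by rw [← Finset.sum_mul, hw1 i α hα, one_mul]
  have hhb : ∃ C0, ∀ q, |h q| ≤ C0 := by
    refine ⟨C + C, fun q => ?_⟩
    rw [hh]
    calc |K a' q - K a q| ≤ |K a' q| + |K a q| := abs_sub _ _
      _ ≤ C + C := add_le_add (hKb a' ha' q) (hKb a ha q)
  have hhmono : Monotone h := by
    intro q q' hq
    rw [hh]
    simp only []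
    set d : ℝ → ℝ := fun p => F p q' - F p q with hd
    have hdmono : Monotone d := by
      intro p p' hp
      have := hFid p p' q q' hp hq
      rw [hd]; simp only []; linarith
    have hdb : ∃ C0, ∀ r, |d r| ≤ C0 := by
      refine ⟨C + C, fun r => ?_⟩
      rw [hd]
      calc |F r q' - F r q| ≤ |F r q'| + |F r q| := abs_sub _ _
        _ ≤ C + C := add_le_add (hFb _ _) (hFb _ _)
    have key : K a q' - K a q ≤ K a' q' - K a' q := by
      have e1 : ∀ α, K α q' - K α q = ∑ u ∈ RngX i, w i α u * d (α + u) := by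
        intro α
        rw [hK]
        simp only []
        rw [← Finset.sum_sub_distrib]
        exact Finset.sum_congr rfl fun u _ => by rw [hd]; ring
      rw [e1, e1]
      calc ∑ u ∈ RngX i, w i a u * d (a + u)
          ≤ ∑ u ∈ RngX i, w i a u * d (a' + u) := by
            refine Finset.sum_le_sum fun u _ => ?_
            exact mul_le_mul_of_nonneg_left (hdmono (by linarith)) (hw0 i a u)
        _ ≤ ∑ u ∈ RngX i, w i a' u * d (a' + u) := by
            refine hSM i a ha a' ha' haa (fun r => d (a' + r))
              (fun r r' hrr => hdmono (by linarith)) ?_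
            obtain ⟨C0, hC0⟩ := hdb
            exact ⟨C0, fun r => hC0 _⟩
    linarith
  -- final assembly
  have hGrep : ∀ α β, g (Function.update (Function.update z i α) j β)
      = ∑ v ∈ RngX j, w j β v * K α (β + v) := by
    intro α β
    rw [hrep α β, Finset.sum_comm]
    refine Finset.sum_congr rfl fun v _ => ?_
    rw [hK]
    simp only []
    rw [Finset.mul_sum]
    exact Finset.sum_congr rfl fun u _ => by ring
  rw [hGrep, hGrep, hGrep, hGrep]
  have key : ∑ v ∈ RngX j, w j b v * h (b + v) ≤ ∑ v ∈ RngX j, w j b' v * h (b' + v) :=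
    calc ∑ v ∈ RngX j, w j b v * h (b + v)
        ≤ ∑ v ∈ RngX j, w j b v * h (b' + v) := by
          refine Finset.sum_le_sum fun v _ => ?_
          exact mul_le_mul_of_nonneg_left (hhmono (by linarith)) (hw0 j b v)
      _ ≤ ∑ v ∈ RngX j, w j b' v * h (b' + v) := by
          refine hSM j b hb b' hb' hbb (fun r => h (b' + r))
            (fun r r' hrr => hhmono (by linarith)) ?_
          obtain ⟨C0, hC0⟩ := hhb
          exact ⟨C0, fun r => hC0 _⟩
  have e2 : ∀ β, (∑ v ∈ RngX j, w j β v * K a' (β + v))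
      - (∑ v ∈ RngX j, w j β v * K a (β + v)) = ∑ v ∈ RngX j, w j β v * h (β + v) := by
    intro β
    rw [← Finset.sum_sub_distrib]
    exact Finset.sum_congr rfl fun v _ => by rw [hh]; ring
  have e2b := e2 b
  have e2b' := e2 b'
  linarith
end DiscretePID


lemma integrable_of_bdd {Ω : Type*} [MeasurableSpace Ω] (μ : Measure Ω) [IsFiniteMeasure μ]
    {f : Ω → ℝ} (hf : Measurable f) (C : ℝ) (hC : ∀ ω, |f ω| ≤ C) : Integrable f μ := by
  refine (integrable_const C).mono' hf.aestronglyMeasurable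
    (Filter.Eventually.of_forall fun ω => ?_)
  simpa using hC ω


/-- partial sums `S^(k)` of finitely-valued random vectors on an
atomless probability space are NSMD, provided (i) each `X^(k)` is conditionally NSMD
given `S^(k-1)`, (ii) the conditional law of `X_I^(k)` given `S^(k-1)` depends only
on `S_I^(k-1)`, and (iii) the conditional law of `X_I^(k)` given `S_I^(k-1) = s_I`
is stochastically increasing in `s_I`. -/
theorem partial_sums_NSMD {Ω : Type*} [MeasurableSpace Ω] (μ : Measure Ω)
    [IsProbabilityMeasure μ]
    -- the probability space is atomless
    (hatomless : ∀ A : Set Ω, MeasurableSet A → 0 < μ A →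
      ∃ B ⊆ A, MeasurableSet B ∧ 0 < μ B ∧ μ B < μ A)
    (n m : ℕ) (X : ℕ → Ω → Fin n → ℝ)
    (hXmeas : ∀ k, Measurable (X k)) (hXfin : ∀ k, (Set.range (X k)).Finite)
    (S : ℕ → Ω → Fin n → ℝ)
    (hS : ∀ k ω i, S k ω i = ∑ ν ∈ Finset.Icc 1 k, X ν ω i)
    -- (i) conditional negative supermodular dependence
    (hNSMD : ∀ k ∈ Finset.Icc 1 m, ∀ s : Fin n → ℝ,
      μ {ω | S (k - 1) ω = s} ≠ 0 → IsNSMD (μ[|{ω | S (k - 1) ω = s}]) (X k))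
    -- (ii) the conditional law of `X_I^(k)` given `S^(k-1)` depends only on `S_I^(k-1)`
    (hdep : ∀ k ∈ Finset.Icc 1 m, ∀ I : Finset (Fin n), ∀ s : Fin n → ℝ,
      μ {ω | S (k - 1) ω = s} ≠ 0 →
      Measure.map (fun ω (i : {i : Fin n // i ∈ I}) => X k ω i.1)
          (μ[|{ω | S (k - 1) ω = s}])
        = Measure.map (fun ω (i : {i : Fin n // i ∈ I}) => X k ω i.1)
          (μ[|{ω | ∀ i ∈ I, S (k - 1) ω i = s i}]))
    -- (iii) conditional stochastic monotonicity
    (hsi : ∀ k ∈ Finset.Icc 1 m, ∀ I : Finset (Fin n), ∀ s s' : Fin n → ℝ,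
      (∀ i ∈ I, s i ≤ s' i) →
      μ {ω | ∀ i ∈ I, S (k - 1) ω i = s i} ≠ 0 →
      μ {ω | ∀ i ∈ I, S (k - 1) ω i = s' i} ≠ 0 →
      ∀ φ : ({i : Fin n // i ∈ I} → ℝ) → ℝ, Monotone φ → (∃ C, ∀ v, |φ v| ≤ C) →
        ∫ ω, φ (fun i => X k ω i.1) ∂(μ[|{ω | ∀ i ∈ I, S (k - 1) ω i = s i}])
          ≤ ∫ ω, φ (fun i => X k ω i.1) ∂(μ[|{ω | ∀ i ∈ I, S (k - 1) ω i = s' i}])) :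
    ∀ k ∈ Finset.Icc 1 m, IsNSMD μ (S k) := by
  classical
  -- basic structure of S
  have hS0 : ∀ ω, S 0 ω = fun _ => (0 : ℝ) := by
    intro ω; funext i; rw [hS]; simp
  have hSsucc : ∀ k ω, S (k + 1) ω = S k ω + X (k + 1) ω := by
    intro k ω; funext i
    rw [hS, Pi.add_apply, hS]
    exact Finset.sum_Icc_succ_top (Nat.le_add_left 1 k) _
  have hSmeas : ∀ k, Measurable (S k) := by
    intro k
    induction k with
    | zero =>
      have : S 0 = fun _ _ => (0:ℝ) := funext fun ω => hS0 ω
      rw [this]; exact measurable_const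
    | succ k ih =>
      have : S (k+1) = fun ω => S k ω + X (k+1) ω := funext fun ω => hSsucc k ω
      rw [this]
      refine measurable_pi_lambda _ fun i => ?_
      exact (((measurable_pi_apply i).comp ih).add ((measurable_pi_apply i).comp (hXmeas (k+1))))
  have hSfin : ∀ k, (Set.range (S k)).Finite := by
    intro k
    induction k with
    | zero =>
      refine Set.Finite.subset (Set.finite_singleton (fun _ => (0:ℝ))) ?_
      rintro - ⟨ω, rfl⟩; simp [hS0 ω]
    | succ k ih =>
      refine Set.Finite.subset (Set.Finite.image2 (· + ·) ih (hXfin (k+1))) ?_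
      rintro - ⟨ω, rfl⟩
      exact ⟨S k ω, ⟨ω, rfl⟩, X (k+1) ω, ⟨ω, rfl⟩, (hSsucc k ω).symm⟩
  -- main induction
  have main : ∀ k, k ≤ m → IsNSMD μ (S k) := by
    intro k
    induction k with
    | zero =>
      intro _ ψ hψm hψb hψsm
      have hmap : ∀ i : Fin n, Measure.map (fun ω => S 0 ω i) μ = Measure.dirac 0 := by
        intro i
        have : (fun ω => S 0 ω i) = fun _ => (0:ℝ) := funext fun ω => by rw [hS0 ω]
        rw [this, Measure.map_const, measure_univ, one_smul]
      have hlhs : ∫ ω, ψ (S 0 ω) ∂μ = ψ (fun _ => 0) := by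
        have : (fun ω => ψ (S 0 ω)) = fun _ => ψ (fun _ => 0) :=
          funext fun ω => by rw [hS0 ω]
        rw [this, integral_const, probReal_univ, one_smul]
      have hpi : Measure.pi (fun i => Measure.map (fun ω => S 0 ω i) μ)
          = ∑ x ∈ Fintype.piFinset (fun _ : Fin n => ({0} : Finset ℝ)),
              (∏ _i : Fin n, (1:ENNReal)) • Measure.dirac x := by
        have h1 : (fun i : Fin n => Measure.map (fun ω => S 0 ω i) μ)
            = fun _ : Fin n => Measure.dirac (0:ℝ) := funext hmap
        rw [h1]
        refine pi_eq_sum_dirac _ _ (fun _ _ => 1) (fun i r _ => ENNReal.one_ne_top) ?_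
        intro i; simp
      have hsingle : Fintype.piFinset (fun _ : Fin n => ({0} : Finset ℝ))
          = {fun _ => (0:ℝ)} := by
        ext f
        simp only [Fintype.mem_piFinset, Finset.mem_singleton]
        constructor
        · intro h; funext i; exact h i
        · intro h i; rw [h]
      have hrhs : ∫ x, ψ x ∂(Measure.pi (fun i => Measure.map (fun ω => S 0 ω i) μ))
          = ψ (fun _ => 0) := by
        rw [hpi, integral_finset_dirac _ _ (fun x _ => by simp), hsingle,
          Finset.sum_singleton]
        simp
      rw [hlhs, hrhs]
    | succ k IH =>
      intro hk1
      have hkm : (k+1) ∈ Finset.Icc 1 m := Finset.mem_Icc.2 ⟨Nat.le_add_left 1 k, hk1⟩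
      have hNS := hNSMD (k+1) hkm
      have hdepk := hdep (k+1) hkm
      have hsik := hsi (k+1) hkm
      simp only [Nat.add_sub_cancel] at hNS hdepk hsik
      intro ψ hψm hψbd hψsm
      obtain ⟨C, hψb⟩ := hψbd
      have hCnn : (0:ℝ) ≤ C := le_trans (abs_nonneg _) (hψb (fun _ => 0))
      -- measurability of coordinates
      have hXim : ∀ i : Fin n, Measurable (fun ω => X (k+1) ω i) :=
        fun i => (measurable_pi_apply i).comp (hXmeas (k+1))
      have hSim : ∀ i : Fin n, Measurable (fun ω => S k ω i) :=
        fun i => (measurable_pi_apply i).comp (hSmeas k)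
      have hS1im : ∀ i : Fin n, Measurable (fun ω => S (k+1) ω i) :=
        fun i => (measurable_pi_apply i).comp (hSmeas (k+1))
      have hBms : ∀ (i : Fin n) (t : ℝ), MeasurableSet {ω | S k ω i = t} :=
        fun i t => hSim i (measurableSet_singleton t)
      have hAms : ∀ s : Fin n → ℝ, MeasurableSet {ω | S k ω = s} :=
        fun s => hSmeas k (measurableSet_singleton s)
      -- finite ranges
      set RX : Fin n → Finset ℝ := fun i => ((hXfin (k+1)).image (fun f => f i)).toFinset
        with hRX
      set TS : Fin n → Finset ℝ := fun i => ((hSfin k).image (fun f => f i)).toFinset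
        with hTS
      set VS : Fin n → Finset ℝ := fun i => ((hSfin (k+1)).image (fun f => f i)).toFinset
        with hVS
      set RP : Finset (Fin n → ℝ) := (hSfin k).toFinset with hRP
      have hXr : ∀ (i : Fin n) ω, X (k+1) ω i ∈ RX i := by
        intro i ω
        rw [hRX, Set.Finite.mem_toFinset]
        exact ⟨X (k+1) ω, ⟨ω, rfl⟩, rfl⟩
      have hXr0 : ∀ (i : Fin n) (r : ℝ), r ∉ RX i → {ω | X (k+1) ω i = r} = ∅ := by
        intro i r hr
        rw [Set.eq_empty_iff_forall_notMem]
        intro ω hω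
        exact hr (hω ▸ hXr i ω)
      have hSr : ∀ ω, S k ω ∈ RP := fun ω => (Set.Finite.mem_toFinset _).2 ⟨ω, rfl⟩
      have hSri : ∀ (i : Fin n) ω, S k ω i ∈ TS i := by
        intro i ω
        rw [hTS, Set.Finite.mem_toFinset]
        exact ⟨S k ω, ⟨ω, rfl⟩, rfl⟩
      have hS1ri : ∀ (i : Fin n) ω, S (k+1) ω i ∈ VS i := by
        intro i ω
        rw [hVS, Set.Finite.mem_toFinset]
        exact ⟨S (k+1) ω, ⟨ω, rfl⟩, rfl⟩
      have hS1r0 : ∀ (i : Fin n) (v : ℝ), v ∉ VS i → {ω | S (k+1) ω i = v} = ∅ := by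
        intro i v hv
        rw [Set.eq_empty_iff_forall_notMem]
        intro ω hω
        exact hv (hω ▸ hS1ri i ω)
      -- positive-probability grid
      set T : Fin n → Finset ℝ :=
        fun i => (TS i).filter (fun t => μ {ω | S k ω i = t} ≠ 0) with hT
      have hTmem : ∀ (i : Fin n) {t : ℝ}, t ∈ T i → μ {ω | S k ω i = t} ≠ 0 :=
        fun i t ht => (Finset.mem_filter.1 ht).2
      have hTne : ∀ i, (T i).Nonempty := by
        intro i
        by_contra hemp
        rw [Finset.not_nonempty_iff_eq_empty] at hemp
        have hzero : ∀ t ∈ TS i, μ {ω | S k ω i = t} = 0 := by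
          intro t ht
          by_contra h0
          have : t ∈ T i := Finset.mem_filter.2 ⟨ht, h0⟩
          rw [hemp] at this
          exact absurd this (Finset.notMem_empty t)
        have hcover : (Set.univ : Set Ω) ⊆ ⋃ t ∈ TS i, {ω | S k ω i = t} := by
          intro ω _
          exact Set.mem_biUnion (hSri i ω) rfl
        have : (1:ENNReal) ≤ 0 := by
          calc (1:ENNReal) = μ Set.univ := measure_univ.symm
            _ ≤ μ (⋃ t ∈ TS i, {ω | S k ω i = t}) := measure_mono hcover
            _ ≤ ∑ t ∈ TS i, μ {ω | S k ω i = t} := measure_biUnion_finset_le _ _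
            _ = 0 := Finset.sum_eq_zero hzero
        simp at this
      -- weights
      set w : Fin n → ℝ → ℝ → ℝ :=
        fun i t r => (μ[|{ω | S k ω i = t}] {ω | X (k+1) ω i = r}).toReal with hw
      have hw0 : ∀ i t r, 0 ≤ w i t r := fun i t r => ENNReal.toReal_nonneg
      have hw1 : ∀ i, ∀ t ∈ T i, ∑ r ∈ RX i, w i t r = 1 := by
        intro i t ht
        haveI := cond_isProbabilityMeasure (μ := μ) (hTmem i ht)
        have := integral_comp_finrange (μ[|{ω | S k ω i = t}]) (hXim i) (RX i) (hXr i)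
          (fun _ => (1:ℝ))
        rw [integral_const, probReal_univ, one_smul] at this
        refine Eq.trans ?_ this.symm
        exact Finset.sum_congr rfl fun r _ => by rw [mul_one]; rfl
      -- singleton-set conversion
      have hsetI : ∀ (i : Fin n) (c : Fin n → ℝ),
          {ω | ∀ l ∈ ({i} : Finset (Fin n)), S k ω l = c l} = {ω | S k ω i = c i} := by
        intro i c; ext ω
        simp only [Set.mem_setOf_eq, Finset.mem_singleton]
        constructor
        · intro h; exact h i rfl
        · intro h l hl; rw [hl]; exact h
      -- stochastic monotonicity, in discrete form
      have hSMlem : ∀ i : Fin n, ∀ t ∈ T i, ∀ t' ∈ T i, t ≤ t' → ∀ d : ℝ → ℝ, Monotone d →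
          (∃ C0, ∀ r, |d r| ≤ C0) →
          ∑ r ∈ RX i, w i t r * d r ≤ ∑ r ∈ RX i, w i t' r * d r := by
        intro i t ht t' ht' htt' d hd hdb
        obtain ⟨C0, hC0⟩ := hdb
        have h1 : μ {ω | ∀ l ∈ ({i} : Finset (Fin n)), S k ω l = (fun _ => t) l} ≠ 0 := by
          rw [hsetI]; exact hTmem i ht
        have h2 : μ {ω | ∀ l ∈ ({i} : Finset (Fin n)), S k ω l = (fun _ => t') l} ≠ 0 := by
          rw [hsetI]; exact hTmem i ht'
        have hmono : Monotone (fun v : ({l : Fin n // l ∈ ({i} : Finset (Fin n))} → ℝ) =>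
            d (v ⟨i, Finset.mem_singleton_self i⟩)) := fun v v' hvv' => hd (hvv' _)
        have hkey := hsik {i} (fun _ => t) (fun _ => t') (fun l _ => htt') h1 h2 _ hmono
          ⟨C0, fun v => hC0 _⟩
        rw [hsetI, hsetI] at hkey
        haveI := cond_isProbabilityMeasure (μ := μ) (hTmem i ht)
        haveI := cond_isProbabilityMeasure (μ := μ) (hTmem i ht')
        have e1 := integral_comp_finrange (μ[|{ω | S k ω i = t}]) (hXim i) (RX i) (hXr i) d
        have e2 := integral_comp_finrange (μ[|{ω | S k ω i = t'}]) (hXim i) (RX i) (hXr i) d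
        calc ∑ r ∈ RX i, w i t r * d r
            = ∫ ω, d (X (k+1) ω i) ∂(μ[|{ω | S k ω i = t}]) := by
              rw [e1]; exact Finset.sum_congr rfl fun r _ => rfl
          _ ≤ ∫ ω, d (X (k+1) ω i) ∂(μ[|{ω | S k ω i = t'}]) := hkey
          _ = ∑ r ∈ RX i, w i t' r * d r := by
              rw [e2]; exact Finset.sum_congr rfl fun r _ => rfl
      -- consequence of (ii): one-dimensional conditional laws
      have hdep1 : ∀ s : Fin n → ℝ, μ {ω | S k ω = s} ≠ 0 → ∀ (i : Fin n) (r : ℝ),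
          μ[|{ω | S k ω = s}] {ω | X (k+1) ω i = r}
            = μ[|{ω | S k ω i = s i}] {ω | X (k+1) ω i = r} := by
        intro s hs i r
        have hd := hdepk {i} s hs
        rw [hsetI i s] at hd
        have hFmeas : Measurable
            (fun ω (l : {l : Fin n // l ∈ ({i} : Finset (Fin n))}) => X (k+1) ω l.1) :=
          measurable_pi_lambda _ fun l => hXim l.1
        have hev : Measurable (fun v : ({l : Fin n // l ∈ ({i} : Finset (Fin n))} → ℝ) =>
            v ⟨i, Finset.mem_singleton_self i⟩) := measurable_pi_apply _
        have hcomp := congrArg (Measure.map (fun v :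
            ({l : Fin n // l ∈ ({i} : Finset (Fin n))} → ℝ) =>
            v ⟨i, Finset.mem_singleton_self i⟩)) hd
        rw [Measure.map_map hev hFmeas, Measure.map_map hev hFmeas] at hcomp
        have hr : MeasurableSet ({r} : Set ℝ) := measurableSet_singleton r
        have happ := congrArg (fun ν : Measure ℝ => ν {r}) hcomp
        rw [Measure.map_apply (hev.comp hFmeas) hr,
          Measure.map_apply (hev.comp hFmeas) hr] at happ
        exact happ
      -- the averaged function and its grid projection
      set g : (Fin n → ℝ) → ℝ :=
        fun s => ∑ x ∈ Fintype.piFinset RX, (∏ l, w l (s l) (x l)) * ψ (s + x) with hgdef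
      have hgeq : ∀ s, g s = ∑ x ∈ Fintype.piFinset RX, (∏ l, w l (s l) (x l)) * ψ (s + x) :=
        fun s => rfl
      set πv : (Fin n → ℝ) → (Fin n → ℝ) := fun s i => projT (T i) (hTne i) (s i) with hπ
      set gt : (Fin n → ℝ) → ℝ := fun s => g (πv s) with hgt
      have hgteq : ∀ s, gt s = g (πv s) := fun s => rfl
      have hπmem : ∀ s, πv s ∈ Fintype.piFinset T :=
        fun s => Fintype.mem_piFinset.2 fun i => projT_mem _ _ _
      have hπmeas : Measurable πv :=
        measurable_pi_lambda _ fun i =>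
          ((projT_mono (T i) (hTne i)).measurable).comp (measurable_pi_apply i)
      have hπfix : ∀ s : Fin n → ℝ, (∀ i, s i ∈ T i) → πv s = s := by
        intro s h; funext i; exact projT_eq_self _ _ (h i)
      have hgbdd : ∀ s : Fin n → ℝ, (∀ i, s i ∈ T i) → |g s| ≤ C := by
        intro s hsT
        have hsum1 : ∑ x ∈ Fintype.piFinset RX, ∏ l, w l (s l) (x l) = 1 := by
          rw [← Finset.prod_univ_sum RX (fun l r => w l (s l) r)]
          exact Finset.prod_eq_one fun l _ => hw1 l (s l) (hsT l)
        rw [hgeq]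
        calc |∑ x ∈ Fintype.piFinset RX, (∏ l, w l (s l) (x l)) * ψ (s + x)|
            ≤ ∑ x ∈ Fintype.piFinset RX, |(∏ l, w l (s l) (x l)) * ψ (s + x)| :=
              Finset.abs_sum_le_sum_abs _ _
          _ ≤ ∑ x ∈ Fintype.piFinset RX, (∏ l, w l (s l) (x l)) * C := by
              refine Finset.sum_le_sum fun x _ => ?_
              have hnn : 0 ≤ ∏ l, w l (s l) (x l) :=
                Finset.prod_nonneg fun l _ => hw0 l (s l) (x l)
              rw [abs_mul, abs_of_nonneg hnn]
              exact mul_le_mul_of_nonneg_left (hψb _) hnn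
          _ = C := by rw [← Finset.sum_mul, hsum1, one_mul]
      have hgtmeas : Measurable gt :=
        measurable_comp_finrange hπmeas (Fintype.piFinset T) hπmem g
      have hgtbdd : ∀ s, |gt s| ≤ C := fun s => hgbdd (πv s) fun i => projT_mem _ _ _
      have hπupd : ∀ (z : Fin n → ℝ) (i : Fin n) (α : ℝ),
          πv (Function.update z i α)
            = Function.update (πv z) i (projT (T i) (hTne i) α) := by
        intro z i α; funext l
        by_cases hli : l = i
        · subst hli
          show projT (T l) (hTne l) (Function.update z l α l) = _
          rw [Function.update_self, Function.update_self]
        · show projT (T l) (hTne l) (Function.update z i α l)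
            = Function.update (πv z) i (projT (T i) (hTne i) α) l
          rw [Function.update_apply, if_neg hli, Function.update_apply, if_neg hli]
      have hgtPID : PID gt := by
        intro i j hij z a a' b b' haa hbb
        have key := discrete_grid_PID ψ C hψb hψsm RX T w hw0 hw1 hSMlem g hgeq
          (πv z) (fun l => projT_mem _ _ _) i j hij
          (projT (T i) (hTne i) a) (projT (T i) (hTne i) a')
          (projT (T j) (hTne j) b) (projT (T j) (hTne j) b')
          (projT_mem _ _ _) (projT_mem _ _ _) (projT_mem _ _ _) (projT_mem _ _ _)
          (projT_mono _ _ haa) (projT_mono _ _ hbb)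
        have e : ∀ (α : ℝ) (β : ℝ),
            gt (Function.update (Function.update z i α) j β)
              = g (Function.update (Function.update (πv z) i (projT (T i) (hTne i) α)) j
                  (projT (T j) (hTne j) β)) := by
          intro α β
          rw [hgteq, hπupd, hπupd]
        rw [e, e, e, e]
        exact key
      have hgtsm : ∀ x y, gt x + gt y ≤ gt (x ⊔ y) + gt (x ⊓ y) := PID_supermodular hgtPID
      -- the main chain
      have hint : Integrable (fun ω => ψ (S (k+1) ω)) μ :=
        integrable_of_bdd μ (hψm.comp (hSmeas (k+1))) C fun ω => hψb _
      have L1 : ∫ ω, ψ (S (k+1) ω) ∂μ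
          = ∑ s ∈ RP, (μ ((S k) ⁻¹' {s})).toReal
              * ∫ ω, ψ (s + X (k+1) ω) ∂(μ[|(S k) ⁻¹' {s}]) := by
        rw [integral_partition μ (hSmeas k) RP hSr _ hint]
        refine Finset.sum_congr rfl fun s _ => ?_
        congr 1
        refine integral_congr_ae ?_
        have hnull : μ[|(S k) ⁻¹' {s}] {ω | S k ω ≠ s} = 0 := by
          rw [cond_apply (hSmeas k (measurableSet_singleton s))]
          have hempty : (S k) ⁻¹' {s} ∩ {ω | S k ω ≠ s} = ∅ := by
            ext ω
            simp only [Set.mem_inter_iff, Set.mem_preimage, Set.mem_singleton_iff,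
              Set.mem_setOf_eq, Set.mem_empty_iff_false, iff_false, not_and]
            exact fun h => by rw [h]; simp
          rw [hempty, measure_empty, mul_zero]
        have hsub : {ω | ¬ (ψ (S (k+1) ω) = ψ (s + X (k+1) ω))} ⊆ {ω | S k ω ≠ s} := by
          intro ω hω
          simp only [Set.mem_setOf_eq] at hω ⊢
          intro hc
          exact hω (by rw [hSsucc k ω, hc])
        exact MeasureTheory.ae_iff.2 (measure_mono_null hsub hnull)
      have L2 : ∀ s ∈ RP, μ {ω | S k ω = s} ≠ 0 →
          ∫ ω, ψ (s + X (k+1) ω) ∂(μ[|(S k) ⁻¹' {s}]) ≤ g s := by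
        intro s hsRP hs
        haveI := cond_isProbabilityMeasure (μ := μ) hs
        have hadd : Measurable (fun x : Fin n → ℝ => s + x) :=
          measurable_pi_lambda _ fun i => (measurable_pi_apply (X := fun _ : Fin n => ℝ) i).const_add (s i)
        have hψsmeas : Measurable (fun x : Fin n → ℝ => ψ (s + x)) := hψm.comp hadd
        have hψssm : ∀ x y : Fin n → ℝ,
            ψ (s + x) + ψ (s + y) ≤ ψ (s + (x ⊔ y)) + ψ (s + (x ⊓ y)) := by
          intro x y
          have h1 : (s + x) ⊔ (s + y) = s + (x ⊔ y) :=
            funext fun i => max_add_add_left (s i) (x i) (y i)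
          have h2 : (s + x) ⊓ (s + y) = s + (x ⊓ y) :=
            funext fun i => min_add_add_left (s i) (x i) (y i)
          calc ψ (s + x) + ψ (s + y) ≤ ψ ((s + x) ⊔ (s + y)) + ψ ((s + x) ⊓ (s + y)) :=
                hψsm _ _
            _ = ψ (s + (x ⊔ y)) + ψ (s + (x ⊓ y)) := by rw [h1, h2]
        have hNs := hNS s hs (fun x => ψ (s + x)) hψsmeas ⟨C, fun v => hψb _⟩ hψssm
        refine le_trans hNs ?_
        have hBne : ∀ i : Fin n, μ {ω | S k ω i = s i} ≠ 0 := by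
          intro i h0
          refine hs (measure_mono_null ?_ h0)
          intro ω hω
          rw [Set.mem_setOf_eq] at hω ⊢
          rw [hω]
        have hmapi : ∀ i : Fin n,
            Measure.map (fun ω => X (k+1) ω i) (μ[|{ω | S k ω = s}])
            = ∑ r ∈ RX i, (μ[|{ω | S k ω i = s i}] {ω | X (k+1) ω i = r})
                • Measure.dirac r := by
          intro i
          rw [map_eq_sum_dirac _ (hXim i) (RX i) (hXr i)]
          exact Finset.sum_congr rfl fun r _ =>
            congrArg (fun q : ENNReal => q • Measure.dirac r) (hdep1 s hs i r)
        have hcfin : ∀ i : Fin n, ∀ r ∈ RX i,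
            μ[|{ω | S k ω i = s i}] {ω | X (k+1) ω i = r} ≠ ⊤ := by
          intro i r _
          haveI := cond_isProbabilityMeasure (μ := μ) (hBne i)
          exact measure_ne_top _ _
        rw [pi_eq_sum_dirac _ RX _ hcfin hmapi, integral_finset_dirac _ _ (fun x hx => by
          refine (ENNReal.prod_lt_top ?_).ne
          intro i _
          exact (hcfin i (x i) (Fintype.mem_piFinset.1 hx i)).lt_top)]
        refine le_of_eq ?_
        rw [hgeq]
        refine Finset.sum_congr rfl fun x hx => ?_
        rw [ENNReal.toReal_prod]
      have L5 : ∫ x, gt x ∂(Measure.pi fun i => Measure.map (fun ω => S k ω i) μ)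
          = ∫ x, ψ x ∂(Measure.pi fun i => Measure.map (fun ω => S (k+1) ω i) μ) := by
        have hlamM : ∀ i, Measure.map (fun ω => S k ω i) μ
            = ∑ t ∈ TS i, μ {ω | S k ω i = t} • Measure.dirac t :=
          fun i => map_eq_sum_dirac μ (hSim i) (TS i) (hSri i)
        have hlaw : ∀ i, Measure.map (fun ω => S (k+1) ω i) μ
            = ∑ v ∈ VS i, μ {ω | S (k+1) ω i = v} • Measure.dirac v :=
          fun i => map_eq_sum_dirac μ (hS1im i) (VS i) (hS1ri i)
        have hfin1 : ∀ i : Fin n, ∀ t ∈ TS i, μ {ω | S k ω i = t} ≠ ⊤ :=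
          fun _ _ _ => measure_ne_top _ _
        have hfin2 : ∀ i : Fin n, ∀ v ∈ VS i, μ {ω | S (k+1) ω i = v} ≠ ⊤ :=
          fun _ _ _ => measure_ne_top _ _
        have hLHS : ∫ x, gt x ∂(Measure.pi fun i => Measure.map (fun ω => S k ω i) μ)
            = ∑ s ∈ Fintype.piFinset TS,
                (∏ i, (μ {ω | S k ω i = s i}).toReal) * gt s := by
          rw [pi_eq_sum_dirac _ TS _ hfin1 hlamM, integral_finset_dirac _ _ (fun s _ => by
            refine (ENNReal.prod_lt_top ?_).ne
            intro i _
            exact measure_lt_top _ _)]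
          exact Finset.sum_congr rfl fun s _ => by rw [ENNReal.toReal_prod]
        have hRHS : ∫ x, ψ x ∂(Measure.pi fun i => Measure.map (fun ω => S (k+1) ω i) μ)
            = ∑ v ∈ Fintype.piFinset VS,
                (∏ i, (μ {ω | S (k+1) ω i = v i}).toReal) * ψ v := by
          rw [pi_eq_sum_dirac _ VS _ hfin2 hlaw, integral_finset_dirac _ _ (fun v _ => by
            refine (ENNReal.prod_lt_top ?_).ne
            intro i _
            exact measure_lt_top _ _)]
          exact Finset.sum_congr rfl fun v _ => by rw [ENNReal.toReal_prod]
        set q : Fin n → ℝ → ℝ → ℝ :=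
          fun i t r => (μ {ω | S k ω i = t}).toReal * w i t r with hqdef
        have hq0 : ∀ (i : Fin n) (t r : ℝ), r ∉ RX i → q i t r = 0 := by
          intro i t r hr
          have hwz : w i t r = 0 := by
            show (μ[|{ω | S k ω i = t}] {ω | X (k+1) ω i = r}).toReal = 0
            rw [hXr0 i r hr]
            simp
          show (μ {ω | S k ω i = t}).toReal * w i t r = 0
          rw [hwz, mul_zero]
        have hK1 : ∀ (i : Fin n) (t r : ℝ),
            q i t r = (μ ({ω | S k ω i = t} ∩ {ω | X (k+1) ω i = r})).toReal := by
          intro i t r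
          show (μ {ω | S k ω i = t}).toReal
              * (μ[|{ω | S k ω i = t}] {ω | X (k+1) ω i = r}).toReal = _
          rw [cond_apply (hBms i t)]
          by_cases hB : μ {ω | S k ω i = t} = 0
          · have h0 : μ ({ω | S k ω i = t} ∩ {ω | X (k+1) ω i = r}) = 0 :=
              measure_mono_null Set.inter_subset_left hB
            rw [hB, h0]
            simp
          · rw [ENNReal.toReal_mul, ← mul_assoc, ENNReal.toReal_inv,
              mul_inv_cancel₀ (ENNReal.toReal_ne_zero.2 ⟨hB, measure_ne_top _ _⟩), one_mul]
        have hK1v : ∀ (i : Fin n) (t r : ℝ),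
            {ω | S k ω i = t} ∩ {ω | X (k+1) ω i = r} ⊆ {ω | S (k+1) ω i = t + r} := by
          intro i t r ω hω
          obtain ⟨h1, h2⟩ := hω
          rw [Set.mem_setOf_eq] at h1 h2 ⊢
          rw [congrFun (hSsucc k ω) i, Pi.add_apply, h1, h2]
        have hK2 : ∀ (i : Fin n) (v : ℝ),
            (μ {ω | S (k+1) ω i = v}).toReal = ∑ t ∈ TS i, q i t (v - t) := by
          intro i v
          have hcover : {ω | S (k+1) ω i = v}
              = ⋃ t ∈ TS i, ({ω | S k ω i = t} ∩ {ω | S (k+1) ω i = v}) := by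
            ext ω
            simp only [Set.mem_setOf_eq, Set.mem_iUnion, Set.mem_inter_iff]
            constructor
            · intro h; exact ⟨S k ω i, hSri i ω, rfl, h⟩
            · rintro ⟨t, ht, h1, h2⟩; exact h2
          have hpiece : ∀ t : ℝ, {ω | S k ω i = t} ∩ {ω | S (k+1) ω i = v}
              = {ω | S k ω i = t} ∩ {ω | X (k+1) ω i = v - t} := by
            intro t
            ext ω
            simp only [Set.mem_inter_iff, Set.mem_setOf_eq]
            have hsum : S (k+1) ω i = S k ω i + X (k+1) ω i := by
              rw [congrFun (hSsucc k ω) i, Pi.add_apply]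
            constructor
            · rintro ⟨h1, h2⟩
              refine ⟨h1, ?_⟩
              rw [hsum, h1] at h2
              linarith
            · rintro ⟨h1, h2⟩
              refine ⟨h1, ?_⟩
              rw [hsum, h1, h2]
              ring
          rw [hcover, measure_biUnion_finset ?_ ?_]
          · rw [ENNReal.toReal_sum (fun t _ => measure_ne_top _ _)]
            refine Finset.sum_congr rfl fun t _ => ?_
            rw [hpiece t, hK1]
          · intro t1 ht1 t2 ht2 hne
            refine Set.disjoint_left.2 fun ω hω hω' => hne ?_
            exact hω.1.symm.trans hω'.1
          · intro t _
            exact (hBms i t).inter (hS1im i (measurableSet_singleton v))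
        have hinner : ∀ s ∈ Fintype.piFinset TS,
            ∑ x ∈ Fintype.piFinset RX, (∏ i, q i (s i) (x i)) * ψ (s + x)
            = ∑ v ∈ Fintype.piFinset VS, (∏ i, q i (s i) (v i - s i)) * ψ v := by
          intro s _
          set Img : Fin n → Finset ℝ := fun i => (RX i).image (fun r => s i + r) with hImg
          set U : Fin n → Finset ℝ := fun i => VS i ∪ Img i with hU
          have hsub1 : Fintype.piFinset Img ⊆ Fintype.piFinset U := fun v hv =>
            Fintype.mem_piFinset.2 fun i =>
              Finset.mem_union_right _ (Fintype.mem_piFinset.1 hv i)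
          have hsub2 : Fintype.piFinset VS ⊆ Fintype.piFinset U := fun v hv =>
            Fintype.mem_piFinset.2 fun i =>
              Finset.mem_union_left _ (Fintype.mem_piFinset.1 hv i)
          have eA : ∑ x ∈ Fintype.piFinset RX, (∏ i, q i (s i) (x i)) * ψ (s + x)
              = ∑ v ∈ Fintype.piFinset Img, (∏ i, q i (s i) (v i - s i)) * ψ v := by
            refine Finset.sum_nbij' (fun x => s + x) (fun v => v - s) ?_ ?_ ?_ ?_ ?_
            · intro x hx
              exact Fintype.mem_piFinset.2 fun i =>
                Finset.mem_image.2 ⟨x i, Fintype.mem_piFinset.1 hx i, rfl⟩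
            · intro v hv
              refine Fintype.mem_piFinset.2 fun i => ?_
              obtain ⟨r, hr, hvr⟩ := Finset.mem_image.1 (Fintype.mem_piFinset.1 hv i)
              show v i - s i ∈ RX i
              rw [← hvr, add_sub_cancel_left]
              exact hr
            · intro x _
              funext i
              show s i + x i - s i = x i
              ring
            · intro v _
              funext i
              show s i + (v i - s i) = v i
              ring
            · intro x _
              congr 1
              refine Finset.prod_congr rfl fun i _ => ?_
              congr 1
              show x i = s i + x i - s i
              ring
          have eB : ∑ v ∈ Fintype.piFinset Img, (∏ i, q i (s i) (v i - s i)) * ψ v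
              = ∑ v ∈ Fintype.piFinset U, (∏ i, q i (s i) (v i - s i)) * ψ v := by
            refine Finset.sum_subset hsub1 fun v hvU hvn => ?_
            have hex : ∃ i, v i ∉ Img i := by
              by_contra hno
              push_neg at hno
              exact hvn (Fintype.mem_piFinset.2 hno)
            obtain ⟨i0, hi0⟩ := hex
            have hz : q i0 (s i0) (v i0 - s i0) = 0 := by
              refine hq0 i0 _ _ fun hmem => hi0 ?_
              exact Finset.mem_image.2 ⟨v i0 - s i0, hmem, by ring⟩
            rw [Finset.prod_eq_zero (Finset.mem_univ i0) hz, zero_mul]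
          have eC : ∑ v ∈ Fintype.piFinset VS, (∏ i, q i (s i) (v i - s i)) * ψ v
              = ∑ v ∈ Fintype.piFinset U, (∏ i, q i (s i) (v i - s i)) * ψ v := by
            refine Finset.sum_subset hsub2 fun v hvU hvn => ?_
            have hex : ∃ i, v i ∉ VS i := by
              by_contra hno
              push_neg at hno
              exact hvn (Fintype.mem_piFinset.2 hno)
            obtain ⟨i0, hi0⟩ := hex
            have hempty : {ω | S (k+1) ω i0 = v i0} = ∅ := hS1r0 i0 (v i0) hi0
            have hz : q i0 (s i0) (v i0 - s i0) = 0 := by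
              rw [hK1]
              have hmz : μ ({ω | S k ω i0 = s i0} ∩ {ω | X (k+1) ω i0 = v i0 - s i0}) = 0 := by
                refine measure_mono_null (fun ω hω => ?_) (show μ {ω | S (k+1) ω i0 = v i0} = 0
                  from by rw [hempty]; exact measure_empty)
                have h2 := hK1v i0 (s i0) (v i0 - s i0) hω
                rw [Set.mem_setOf_eq] at h2 ⊢
                rw [h2]
                ring
              rw [hmz]
              simp
            rw [Finset.prod_eq_zero (Finset.mem_univ i0) hz, zero_mul]
          exact eA.trans (eB.trans eC.symm)
        rw [hLHS, hRHS]
        calc ∑ s ∈ Fintype.piFinset TS, (∏ i, (μ {ω | S k ω i = s i}).toReal) * gt s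
            = ∑ s ∈ Fintype.piFinset TS, ∑ x ∈ Fintype.piFinset RX,
                (∏ i, q i (s i) (x i)) * ψ (s + x) := by
              refine Finset.sum_congr rfl fun s hsTS => ?_
              by_cases hz : ∀ i, μ {ω | S k ω i = s i} ≠ 0
              · have hfix : gt s = g s := by
                  rw [hgteq, hπfix s fun i =>
                    Finset.mem_filter.2 ⟨Fintype.mem_piFinset.1 hsTS i, hz i⟩]
                rw [hfix, hgeq, Finset.mul_sum]
                refine Finset.sum_congr rfl fun x _ => ?_
                rw [← mul_assoc, ← Finset.prod_mul_distrib]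
              · push_neg at hz
                obtain ⟨i0, hi0⟩ := hz
                have h1 : (∏ i, (μ {ω | S k ω i = s i}).toReal) = 0 :=
                  Finset.prod_eq_zero (Finset.mem_univ i0) (by rw [hi0]; simp)
                have h2 : ∀ x : Fin n → ℝ, (∏ i, q i (s i) (x i)) = 0 := fun x =>
                  Finset.prod_eq_zero (Finset.mem_univ i0) (by
                    show (μ {ω | S k ω i0 = s i0}).toReal * w i0 (s i0) (x i0) = 0
                    rw [hi0]
                    simp)
                rw [h1, zero_mul]
                exact (Finset.sum_eq_zero fun x _ => by rw [h2 x, zero_mul]).symm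
          _ = ∑ s ∈ Fintype.piFinset TS, ∑ v ∈ Fintype.piFinset VS,
                (∏ i, q i (s i) (v i - s i)) * ψ v := Finset.sum_congr rfl hinner
          _ = ∑ v ∈ Fintype.piFinset VS, ∑ s ∈ Fintype.piFinset TS,
                (∏ i, q i (s i) (v i - s i)) * ψ v := Finset.sum_comm
          _ = ∑ v ∈ Fintype.piFinset VS,
                (∏ i, (μ {ω | S (k+1) ω i = v i}).toReal) * ψ v := by
              refine Finset.sum_congr rfl fun v _ => ?_
              rw [← Finset.sum_mul]
              congr 1
              rw [← Finset.prod_univ_sum TS (fun i t => q i t (v i - t))]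
              exact Finset.prod_congr rfl fun i _ => (hK2 i (v i)).symm
      calc ∫ ω, ψ (S (k+1) ω) ∂μ
          = ∑ s ∈ RP, (μ ((S k) ⁻¹' {s})).toReal
              * ∫ ω, ψ (s + X (k+1) ω) ∂(μ[|(S k) ⁻¹' {s}]) := L1
        _ ≤ ∑ s ∈ RP, (μ ((S k) ⁻¹' {s})).toReal * gt s := by
            refine Finset.sum_le_sum fun s hsRP => ?_
            by_cases hs : μ ((S k) ⁻¹' {s}) = 0
            · rw [hs]; simp
            · have hfix : gt s = g s := by
                rw [hgteq, hπfix s ?_]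
                intro i
                refine Finset.mem_filter.2 ⟨?_, ?_⟩
                · obtain ⟨ω, hω⟩ := (Set.Finite.mem_toFinset _).1 hsRP
                  rw [← hω]; exact hSri i ω
                · intro h0
                  refine hs (measure_mono_null ?_ h0)
                  intro ω hω
                  rw [Set.mem_preimage, Set.mem_singleton_iff] at hω
                  rw [Set.mem_setOf_eq, hω]
              rw [hfix]
              exact mul_le_mul_of_nonneg_left (L2 s hsRP hs) ENNReal.toReal_nonneg
        _ = ∫ ω, gt (S k ω) ∂μ :=
            (integral_comp_finrange μ (hSmeas k) RP hSr gt).symm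
        _ ≤ ∫ x, gt x ∂(Measure.pi fun i => Measure.map (fun ω => S k ω i) μ) :=
            IH (Nat.le_of_succ_le hk1) gt hgtmeas ⟨C, hgtbdd⟩ hgtsm
        _ = ∫ x, ψ x ∂(Measure.pi fun i => Measure.map (fun ω => S (k+1) ω i) μ) := L5



  intro k hk
  exact main k (Finset.mem_Icc.1 hk).2
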